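/- Let D be a free abelian group of finite rank (a lattice), and let A, B, C ⊆ D be subgroups such that: A is saturated in D (i.e., the quotient D/A is torsion-free), A ∩ B = {0}, C ∩ B = {0}, and A + B has finite index in D (i.e., D/(A+B) is finite). Then there exists a subgroup B' of D such that C ∩ B' = {0} and D is the internal direct sum A ⊕ B' (that is, A ∩ B' = {0} and A + B' = D). -/

import Mathlib

/-!
STATEMENT 5: Let `D` be a lattice (a free abelian group of finite rank, encoded here as a
finitely generated free `ℤ`-module) and let `A, B, C` be subgroups (= `ℤ`-submodules) of `D`
such that `A` is saturated in `D` (if `m • x ∈ A` for a nonzero integer `m`, then `x ∈ A`),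
`A ∩ B = 0`, `C ∩ B = 0`, and `A + B` has finite index in `D` (the quotient `D ⧸ (A ⊔ B)` is
finite).  Then there exists a subgroup `B'` of `D` with `C ∩ B' = 0` and `D = A ⊕ B'`
(internally: `A ∩ B' = 0` and `A + B' = D`).
-/

open Matrix Polynomial in
lemma aux_generic {ι κ : Type*} [Fintype ι] [Fintype κ] [DecidableEq ι] [DecidableEq κ]
    (U W : Matrix κ ι ℚ) (e : ℚ) (he : e ≠ 0)
    (hinj : Function.Injective ((e • U + W).mulVec)) :
    ∃ k : ℤ, Function.Injective ((U + (k : ℚ) • W).mulVec) := by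
  classical
  set V : Matrix κ ι ℚ := e • U + W with hV
  have hker : LinearMap.ker (Matrix.toLin' V) = ⊥ := by
    rw [LinearMap.ker_eq_bot]
    intro x y hxy
    apply hinj
    simpa [Matrix.toLin'_apply] using hxy
  obtain ⟨g, hg⟩ := LinearMap.exists_leftInverse_of_injective (Matrix.toLin' V) hker
  set L : Matrix ι κ ℚ := LinearMap.toMatrix' g with hL
  have hLV : L * V = 1 := by
    have h2 := congrArg LinearMap.toMatrix' hg
    rwa [LinearMap.toMatrix'_comp, LinearMap.toMatrix'_toLin', LinearMap.toMatrix'_id] at h2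
  set N : Matrix ι ι ℚ[X] := (L * U).map Polynomial.C + (X : ℚ[X]) • (L * W).map Polynomial.C
    with hN
  have heval : ∀ x : ℚ, N.det.eval x = (L * (U + x • W)).det := by
    intro x
    have h1 : N.map (eval x) = L * (U + x • W) := by
      rw [Matrix.mul_add, Matrix.mul_smul]
      ext i j
      simp only [hN, Matrix.map_apply, Matrix.add_apply, Matrix.smul_apply, eval_add, eval_mul,
        eval_X, eval_C, smul_eq_mul]
    calc N.det.eval x = (evalRingHom x) N.det := rfl
      _ = ((evalRingHom x).mapMatrix N).det := (RingHom.map_det _ _)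
      _ = (N.map (eval x)).det := by rw [RingHom.mapMatrix_apply]; rfl
      _ = (L * (U + x • W)).det := by rw [h1]
  have hne : N.det ≠ 0 := by
    have h2 : N.det.eval e⁻¹ = (e⁻¹) ^ Fintype.card ι := by
      rw [heval]
      have h3 : U + e⁻¹ • W = e⁻¹ • V := by
        rw [hV, smul_add, smul_smul, inv_mul_cancel₀ he, one_smul]
      rw [h3, Matrix.mul_smul, hLV, Matrix.det_smul, Matrix.det_one, mul_one]
    intro h0
    rw [h0, eval_zero] at h2
    exact pow_ne_zero _ (inv_ne_zero he) h2.symm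
  have hfin := Polynomial.finite_setOf_isRoot hne
  have hinfty : (Set.range ((↑) : ℤ → ℚ)).Infinite :=
    Set.infinite_range_of_injective Int.cast_injective
  obtain ⟨x, hxr, hxroot⟩ := (hinfty.diff hfin).nonempty
  obtain ⟨k, rfl⟩ := hxr
  refine ⟨k, ?_⟩
  have hdet : (L * (U + (k : ℚ) • W)).det ≠ 0 := by
    rw [← heval]; exact hxroot
  have hunit : IsUnit (L * (U + (k : ℚ) • W)) :=
    (Matrix.isUnit_iff_isUnit_det _).2 (isUnit_iff_ne_zero.2 hdet)
  have hLinj := Matrix.mulVec_injective_iff_isUnit.2 hunit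
  intro v v' hvv
  apply hLinj
  rw [← Matrix.mulVec_mulVec, ← Matrix.mulVec_mulVec, hvv]

open Matrix in
lemma inj_of_qmat {Q P : Type*} [AddCommGroup Q] [Module ℤ Q] [AddCommGroup P] [Module ℤ P]
    {ι κ : Type*} [Fintype ι] [Fintype κ] [DecidableEq ι] (bQ : Module.Basis ι ℤ Q) (bP : Module.Basis κ ℤ P)
    (f : Q →ₗ[ℤ] P)
    (h : Function.Injective (((LinearMap.toMatrix bQ bP f).map ((↑) : ℤ → ℚ)).mulVec)) :
    Function.Injective f := by
  rw [← LinearMap.ker_eq_bot, Submodule.eq_bot_iff]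
  intro x hx
  have h1 : (LinearMap.toMatrix bQ bP f) *ᵥ (bQ.repr x) = 0 := by
    rw [LinearMap.toMatrix_mulVec_repr, LinearMap.mem_ker.mp hx]
    simp
  have h2 : ((LinearMap.toMatrix bQ bP f).map ((↑) : ℤ → ℚ)) *ᵥ
      (((↑) : ℤ → ℚ) ∘ (bQ.repr x)) = 0 := by
    funext i
    have h2' := RingHom.map_mulVec (Int.castRingHom ℚ) (LinearMap.toMatrix bQ bP f)
      (bQ.repr x) i
    simp only [h1, Pi.zero_apply, map_zero, Int.coe_castRingHom] at h2'
    simpa using h2'.symm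
  have h3 : (((↑) : ℤ → ℚ) ∘ (bQ.repr x)) = 0 := by
    apply h
    rw [h2, Matrix.mulVec_zero]
  have h4 : (bQ.repr x : ι → ℤ) = 0 := by
    funext i
    have := congrFun h3 i
    simpa using this
  have : bQ.repr x = 0 := Finsupp.ext fun i => congrFun h4 i
  simpa using congrArg bQ.repr.symm this

open Matrix in
lemma qmat_of_inj {Q P : Type*} [AddCommGroup Q] [Module ℤ Q] [AddCommGroup P] [Module ℤ P]
    {ι κ : Type*} [Fintype ι] [Fintype κ] [DecidableEq ι] (bQ : Module.Basis ι ℤ Q) (bP : Module.Basis κ ℤ P)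
    (f : Q →ₗ[ℤ] P) (hf : Function.Injective f) :
    Function.Injective (((LinearMap.toMatrix bQ bP f).map ((↑) : ℤ → ℚ)).mulVec) := by
  set M := LinearMap.toMatrix bQ bP f with hM
  set Mq := M.map ((↑) : ℤ → ℚ) with hMq
  have key : ∀ v : ι → ℚ, Mq *ᵥ v = 0 → v = 0 := by
    intro v hv
    set d : ℤ := ∏ i, ((v i).den : ℤ) with hd
    have hdne : d ≠ 0 := by
      apply Finset.prod_ne_zero_iff.2
      intro i _
      exact_mod_cast (v i).den_nz
    set w : ι → ℤ := fun i => (d / ((v i).den : ℤ)) * (v i).num with hw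
    have hwv : ∀ i, (w i : ℚ) = (d : ℚ) * v i := by
      intro i
      have hdvd : ((v i).den : ℤ) ∣ d := Finset.dvd_prod_of_mem _ (Finset.mem_univ i)
      have h5 : ((v i).den : ℤ) * (d / ((v i).den : ℤ)) = d := Int.mul_ediv_cancel' hdvd
      have h6 : (v i) * ((v i).den : ℚ) = ((v i).num : ℚ) := Rat.mul_den_eq_num _
      calc (w i : ℚ) = ((d / ((v i).den : ℤ) : ℤ) : ℚ) * ((v i).num : ℚ) := by
              rw [hw]; exact_mod_cast Int.cast_mul _ _
        _ = ((d / ((v i).den : ℤ) : ℤ) : ℚ) * ((v i) * ((v i).den : ℚ)) := by rw [h6]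
        _ = ((((v i).den : ℤ) * (d / ((v i).den : ℤ)) : ℤ) : ℚ) * v i := by push_cast; ring
        _ = (d : ℚ) * v i := by rw [h5]
    have hMw : M *ᵥ w = 0 := by
      funext j
      have h7 := RingHom.map_mulVec (Int.castRingHom ℚ) M w j
      have h8 : ((Int.castRingHom ℚ) ∘ w : ι → ℚ) = (d : ℚ) • v := by
        funext i
        simpa using hwv i
      rw [h8] at h7
      have h7' : ((Int.castRingHom ℚ) ((M *ᵥ w) j) : ℚ) = 0 := by
        rw [h7]
        show (Mq *ᵥ ((d : ℚ) • v)) j = 0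
        rw [Matrix.mulVec_smul, hv, smul_zero]
        rfl
      simpa using h7'
    -- build element
    set x : Q := bQ.equivFun.symm w with hx
    have hrepr : (bQ.repr x : ι → ℤ) = w := by
      funext i
      rw [hx, ← bQ.equivFun_apply, bQ.equivFun.apply_symm_apply]
    have h9' : ⇑(bP.repr (f x)) = 0 := by
      rw [← LinearMap.toMatrix_mulVec_repr bQ bP, hrepr, ← hM, hMw]
    have h9 : bP.repr (f x) = 0 := DFunLike.coe_injective (by simpa using h9')
    have hfx : f x = 0 := by
      have := congrArg bP.repr.symm h9
      simpa using this
    have hx0 : x = 0 := by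
      apply hf
      simpa using hfx
    have hw0 : w = 0 := by
      rw [hx0] at hrepr
      simpa using hrepr.symm
    funext i
    have := hwv i
    rw [congrFun hw0 i] at this
    have := this.symm
    simp only [Int.cast_zero, Pi.zero_apply] at this
    rcases mul_eq_zero.mp this with h | h
    · exact absurd (by exact_mod_cast h) hdne
    · exact h
  intro v v' hvv
  have : Mq *ᵥ (v - v') = 0 := by
    rw [Matrix.mulVec_sub, hvv, sub_self]
  have := key _ this
  exact sub_eq_zero.mp this

lemma exists_k {Q P : Type*} [AddCommGroup Q] [Module ℤ Q] [Module.Free ℤ Q] [Module.Finite ℤ Q]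
    [AddCommGroup P] [Module ℤ P] [Module.Free ℤ P] [Module.Finite ℤ P]
    (F G : Q →ₗ[ℤ] P) (e : ℕ) (he : e ≠ 0)
    (h : Function.Injective ((e : ℤ) • F + G)) :
    ∃ k : ℤ, Function.Injective (F + k • G) := by
  classical
  set bQ := Module.Free.chooseBasis ℤ Q with hbQ
  set bP := Module.Free.chooseBasis ℤ P with hbP
  set MF := (LinearMap.toMatrix bQ bP F).map ((↑) : ℤ → ℚ) with hMF
  set MG := (LinearMap.toMatrix bQ bP G).map ((↑) : ℤ → ℚ) with hMG
  have key : (e : ℚ) • MF + MG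
      = (LinearMap.toMatrix bQ bP ((e : ℤ) • F + G)).map ((↑) : ℤ → ℚ) := by
    ext i j
    simp [hMF, hMG, Matrix.map_apply, Matrix.add_apply, Matrix.smul_apply]
  have h1 : Function.Injective (((e : ℚ) • MF + MG).mulVec) := by
    rw [key]
    exact qmat_of_inj bQ bP _ h
  obtain ⟨k, hk⟩ := aux_generic MF MG (e : ℚ) (by exact_mod_cast he) h1
  refine ⟨k, inj_of_qmat bQ bP _ ?_⟩
  have key2 : (LinearMap.toMatrix bQ bP (F + k • G)).map ((↑) : ℤ → ℚ)
      = MF + (k : ℚ) • MG := by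
    ext i j
    simp [hMF, hMG, Matrix.map_apply, Matrix.add_apply, Matrix.smul_apply]
  rw [key2]
  exact hk

lemma mkQ_eq_zero_iff {M : Type*} [AddCommGroup M] [Module ℤ M] (S : Submodule ℤ M) (x : M) :
    S.mkQ x = 0 ↔ x ∈ S := by
  rw [Submodule.mkQ_apply, Submodule.Quotient.mk_eq_zero]

theorem stmt5 {D : Type*} [AddCommGroup D] [Module.Free ℤ D] [Module.Finite ℤ D]
    (A B C : Submodule ℤ D)
    (hsat : ∀ (m : ℤ) (x : D), m ≠ 0 → m • x ∈ A → x ∈ A)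
    (hAB : A ⊓ B = ⊥) (hCB : C ⊓ B = ⊥)
    (hfin : Finite (D ⧸ (A ⊔ B))) :
    ∃ B' : Submodule ℤ D, C ⊓ B' = ⊥ ∧ A ⊓ B' = ⊥ ∧ A ⊔ B' = ⊤ := by
  classical
  -- D ⧸ A is torsion-free, hence free and finite
  haveI hQtf : NoZeroSMulDivisors ℤ (D ⧸ A) := by
    refine ⟨fun {m q} hmq => ?_⟩
    by_cases hm : m = 0
    · exact Or.inl hm
    · refine Or.inr ?_
      obtain ⟨x, rfl⟩ := A.mkQ_surjective q
      have : A.mkQ (m • x) = 0 := by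
        rw [map_smul]; exact hmq
      have hmem : m • x ∈ A := by
        rwa [← Submodule.Quotient.mk_eq_zero A]
      have := hsat m x hm hmem
      show A.mkQ x = 0
      rwa [← Submodule.Quotient.mk_eq_zero A] at this
  haveI : Module.Finite ℤ (D ⧸ A) := Module.Finite.quotient ℤ A
  haveI : Module.Free ℤ (D ⧸ A) := Module.free_of_finite_type_torsion_free'
  -- splitting of mkQ
  obtain ⟨s, hs⟩ := Module.projective_lifting_property A.mkQ LinearMap.id A.mkQ_surjective
  have hs' : ∀ q, A.mkQ (s q) = q := fun q => congrArg (fun f => f q) (congrArg DFunLike.coe hs)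
  -- the image of B in D ⧸ A and the exponent e
  set Bbar : Submodule ℤ (D ⧸ A) := B.map A.mkQ with hBbar
  haveI hfin' : Finite ((D ⧸ A) ⧸ Bbar) :=
    Finite.of_equiv _ (Submodule.quotientQuotientEquivQuotientSup A B).symm.toEquiv
  set e : ℕ := Nat.card ((D ⧸ A) ⧸ Bbar) with hecard
  have he : e ≠ 0 := Nat.card_pos.ne'
  have hmem : ∀ q : D ⧸ A, (e : ℤ) • q ∈ Bbar := by
    intro q
    have h1 : e • (Bbar.mkQ q) = 0 := card_nsmul_eq_zero'
    have h2 : Bbar.mkQ (e • q) = 0 := by rw [map_nsmul]; exact h1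
    have h3 : e • q ∈ Bbar := by rwa [← Submodule.Quotient.mk_eq_zero Bbar]
    rwa [Nat.cast_smul_eq_nsmul]
  -- the map j : B → D ⧸ A
  set j : B →ₗ[ℤ] (D ⧸ A) := A.mkQ ∘ₗ B.subtype with hj
  have hjinj : Function.Injective j := by
    rw [← LinearMap.ker_eq_bot, Submodule.eq_bot_iff]
    intro b hb
    have h1 : A.mkQ (b : D) = 0 := hb
    have h2 : (b : D) ∈ A := (mkQ_eq_zero_iff A _).mp h1
    have h3 : (b : D) ∈ A ⊓ B := ⟨h2, b.2⟩
    rw [hAB] at h3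
    exact Subtype.ext h3
  have hjrange : LinearMap.range j = Bbar := by
    rw [hj, LinearMap.range_comp, Submodule.range_subtype]
  -- σ : (D ⧸ A) → D with σ q ∈ B and mkQ (σ q) = e • q
  set eqv : B ≃ₗ[ℤ] LinearMap.range j := LinearEquiv.ofInjective j hjinj with heqv
  have hmem' : ∀ q : D ⧸ A, ((e : ℤ) • (LinearMap.id : (D ⧸ A) →ₗ[ℤ] (D ⧸ A))) q
      ∈ LinearMap.range j := by
    intro q
    rw [hjrange]
    exact hmem q
  set σ : (D ⧸ A) →ₗ[ℤ] D :=
    B.subtype ∘ₗ (eqv.symm : LinearMap.range j →ₗ[ℤ] B) ∘ₗ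
      (LinearMap.codRestrict (LinearMap.range j)
        ((e : ℤ) • (LinearMap.id : (D ⧸ A) →ₗ[ℤ] (D ⧸ A))) hmem') with hσ
  have hσB : ∀ q, σ q ∈ B := by
    intro q
    exact (eqv.symm _).2
  have hmkσ : ∀ q, A.mkQ (σ q) = (e : ℤ) • q := by
    intro q
    have h1 : A.mkQ (σ q) = j (eqv.symm (⟨(e : ℤ) • q, hmem' q⟩ : LinearMap.range j)) := rfl
    rw [h1, LinearEquiv.ofInjective_symm_apply]
  -- saturation of C
  set Cs : Submodule ℤ D :=
    { carrier := {x | ∃ n : ℤ, n ≠ 0 ∧ n • x ∈ C}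
      add_mem' := by
        rintro x y ⟨n, hn, hnx⟩ ⟨m, hm, hmy⟩
        refine ⟨n * m, mul_ne_zero hn hm, ?_⟩
        rw [smul_add]
        have h1 : (n * m) • x = m • (n • x) := by rw [mul_comm, mul_smul]
        have h2 : (n * m) • y = n • (m • y) := by rw [mul_smul]
        rw [h1, h2]
        exact C.add_mem (C.smul_mem m hnx) (C.smul_mem n hmy)
      zero_mem' := ⟨1, one_ne_zero, by simp⟩
      smul_mem' := by
        rintro c x ⟨n, hn, hnx⟩
        refine ⟨n, hn, ?_⟩
        rw [smul_comm]
        exact C.smul_mem c hnx } with hCs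
  have hCCs : C ≤ Cs := fun x hx => ⟨1, one_ne_zero, by simpa⟩
  haveI hPtf : NoZeroSMulDivisors ℤ (D ⧸ Cs) := by
    refine ⟨fun {m q} hmq => ?_⟩
    by_cases hm : m = 0
    · exact Or.inl hm
    · refine Or.inr ?_
      obtain ⟨x, rfl⟩ := Cs.mkQ_surjective q
      have h1 : Cs.mkQ (m • x) = 0 := by rw [map_smul]; exact hmq
      have h2 : m • x ∈ Cs := by rwa [← Submodule.Quotient.mk_eq_zero Cs]
      obtain ⟨n, hn, hnm⟩ := h2
      have h3 : x ∈ Cs := ⟨n * m, mul_ne_zero hn hm, by rwa [mul_smul]⟩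
      exact (mkQ_eq_zero_iff Cs x).mpr h3
  haveI : Module.Finite ℤ (D ⧸ Cs) := Module.Finite.quotient ℤ Cs
  haveI : Module.Free ℤ (D ⧸ Cs) := Module.free_of_finite_type_torsion_free'
  -- the two maps F, G
  set F : (D ⧸ A) →ₗ[ℤ] (D ⧸ Cs) := Cs.mkQ ∘ₗ s with hF
  set G : (D ⧸ A) →ₗ[ℤ] (D ⧸ Cs) := Cs.mkQ ∘ₗ (σ - (e : ℤ) • s) with hG
  have hEFG : ∀ q, ((e : ℤ) • F + G) q = Cs.mkQ (σ q) := by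
    intro q
    simp only [hF, hG, LinearMap.add_apply, LinearMap.smul_apply, LinearMap.comp_apply,
      LinearMap.sub_apply, map_sub, map_smul]
    abel
  have hinj : Function.Injective ((e : ℤ) • F + G) := by
    rw [← LinearMap.ker_eq_bot, Submodule.eq_bot_iff]
    intro q hq
    have h1 : Cs.mkQ (σ q) = 0 := by rw [← hEFG q]; exact hq
    have h2 : σ q ∈ Cs := (mkQ_eq_zero_iff Cs _).mp h1
    obtain ⟨n, hn, hnC⟩ := h2
    have h3 : n • σ q ∈ C ⊓ B := ⟨hnC, B.smul_mem n (hσB q)⟩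
    rw [hCB] at h3
    have h4 : σ q = 0 := by
      rcases smul_eq_zero.mp (h3 : n • σ q = 0) with h | h
      · exact absurd h hn
      · exact h
    have h5 : (e : ℤ) • q = 0 := by rw [← hmkσ q, h4, map_zero]
    rcases smul_eq_zero.mp h5 with h | h
    · exact absurd (by exact_mod_cast h) he
    · exact h
  obtain ⟨k, hk⟩ := exists_k F G e he hinj
  -- the complement
  set τ : (D ⧸ A) →ₗ[ℤ] D := s + k • (σ - (e : ℤ) • s) with hτ
  have hmkτ : ∀ q, A.mkQ (τ q) = q := by
    intro q
    simp only [hτ, LinearMap.add_apply, LinearMap.smul_apply, LinearMap.sub_apply,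
      map_add, map_smul, map_sub, hs', hmkσ]
    simp [smul_sub, smul_smul]
  have hCsτ : ∀ q, Cs.mkQ (τ q) = (F + k • G) q := by
    intro q
    simp only [hτ, hF, hG, LinearMap.add_apply, LinearMap.smul_apply, LinearMap.comp_apply,
      LinearMap.sub_apply, map_add, map_smul, map_sub]
  refine ⟨LinearMap.range τ, ?_, ?_, ?_⟩
  · rw [Submodule.eq_bot_iff]
    rintro x ⟨hxC, q, rfl⟩
    have h1 : (F + k • G) q = 0 := by
      rw [← hCsτ q]
      exact (mkQ_eq_zero_iff Cs _).mpr (hCCs hxC)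
    have h2 : q = 0 := by
      apply hk
      rw [h1, map_zero]
    rw [h2, map_zero]
  · rw [Submodule.eq_bot_iff]
    rintro x ⟨hxA, q, rfl⟩
    have h1 : q = 0 := by
      rw [← hmkτ q]
      exact (mkQ_eq_zero_iff A _).mpr hxA
    rw [h1, map_zero]
  · rw [eq_top_iff]
    intro x _
    have h1 : x - τ (A.mkQ x) ∈ A := by
      rw [← Submodule.Quotient.mk_eq_zero A]
      show A.mkQ (x - τ (A.mkQ x)) = 0
      rw [map_sub, hmkτ, sub_self]
    refine Submodule.mem_sup.2 ⟨x - τ (A.mkQ x), h1, τ (A.mkQ x), ⟨A.mkQ x, rfl⟩, ?_⟩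
    abel
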